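/- arXiv:2310.04332 — 2 statements merged into one kernel-verified Lean document; each statement's English description precedes it below -/
import Mathlib

section
/- Let G be a graph, T ⊆ V(G) with |T| ≥ 2, and let S ⊆ V(G) \ T be a multiway near-separator of (G,T) such that S itself does not separate any terminal t from T \ {t} (i.e., every connected component of G−S contains either zero or at least two terminals, and at least one contains at least two). Then there exists a terminal t ∈ T and a non-terminal vertex v ∈ V(G) \ T such that in G − (S ∪ {v}) there is no path from t to any terminal of T \ {t}. -/
open SimpleGraph

variable {V : Type*}

/-- The graph obtained from `G` by deleting a set `S` of vertices (kept as
isolated vertices; all edges incident to `S` are removed). -/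
def SimpleGraph.eraseVerts (G : SimpleGraph V) (S : Set V) : SimpleGraph V where
  Adj u v := G.Adj u v ∧ u ∉ S ∧ v ∉ S
  symm := ⟨fun u v ⟨h, hu, hv⟩ => ⟨h.symm, hv, hu⟩⟩
  loopless := ⟨fun v h => G.irrefl h.1⟩

/-- Two walks with the same endpoints are internally vertex-disjoint if they
share no vertex other than their common endpoints. -/
def IntDisjoint {G : SimpleGraph V} {a b : V} (p q : G.Walk a b) : Prop :=
  ∀ x ∈ p.support, x ∈ q.support → x = a ∨ x = b

/-- There exist two internally vertex-disjoint `a`–`b` paths in `G`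
(the two paths may coincide if they have no internal vertices). -/
def TwoIVD (G : SimpleGraph V) (a b : V) : Prop :=
  ∃ p q : G.Walk a b, p.IsPath ∧ q.IsPath ∧ IntDisjoint p q

/-- `S` is a multiway near-separator of `(G, T)`. -/
def IsMWNS (G : SimpleGraph V) (T S : Set V) : Prop :=
  S ⊆ Tᶜ ∧ ∀ t₁ ∈ T, ∀ t₂ ∈ T, t₁ ≠ t₂ → ¬ TwoIVD (G.eraseVerts S) t₁ t₂

/-- `G` contains a simple cycle through at least two terminals of `T`. -/
def HasTCycle (G : SimpleGraph V) (T : Set V) : Prop :=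
  ∃ (v : V) (c : G.Walk v v), c.IsCycle ∧
    ∃ t₁ ∈ T, ∃ t₂ ∈ T, t₁ ≠ t₂ ∧ t₁ ∈ c.support ∧ t₂ ∈ c.support

/-- `v` is a cut vertex of `G`. -/
def IsCutVertex (G : SimpleGraph V) (v : V) : Prop :=
  ∃ a b : V, a ≠ v ∧ b ≠ v ∧ G.Reachable a b ∧ ¬ (G.eraseVerts {v}).Reachable a b

/-- `B` is a block of `G`: a maximal vertex set inducing a connected subgraph
without a cut vertex. -/
def IsBlock (G : SimpleGraph V) (B : Set V) : Prop :=
  B.Nonempty ∧ (G.induce B).Connected ∧ (∀ v, ¬ IsCutVertex (G.induce B) v) ∧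
  ∀ B' : Set V, B ⊆ B' → (G.induce B').Connected →
    (∀ v, ¬ IsCutVertex (G.induce B') v) → B' = B

section Helpers

lemma eraseVerts_le (G : SimpleGraph V) (S : Set V) : G.eraseVerts S ≤ G := by
  intro u v h; exact h.1

lemma eraseVerts_eraseVerts (G : SimpleGraph V) (S S' : Set V) :
    (G.eraseVerts S).eraseVerts S' = G.eraseVerts (S ∪ S') := by
  ext u v
  simp only [SimpleGraph.eraseVerts, Set.mem_union]
  tauto

/-- Transfer a walk along a subgraph relation. -/
def walkMono {H' H : SimpleGraph V} (hle : H' ≤ H) {u v : V} (p : H'.Walk u v) : H.Walk u v :=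
  p.transfer H (fun e he => edgeSet_mono hle (p.edges_subset_edgeSet he))

@[simp] lemma walkMono_support {H' H : SimpleGraph V} (hle : H' ≤ H) {u v : V}
    (p : H'.Walk u v) : (walkMono hle p).support = p.support :=
  SimpleGraph.Walk.support_transfer _ _

lemma TwoIVD_mono {H' H : SimpleGraph V} (hle : H' ≤ H) {a b : V} (h : TwoIVD H' a b) :
    TwoIVD H a b := by
  obtain ⟨p, q, hp, hq, hpq⟩ := h
  refine ⟨walkMono hle p, walkMono hle q, ?_, ?_, ?_⟩
  · rw [SimpleGraph.Walk.isPath_def, walkMono_support]; exact hp.2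
  · rw [SimpleGraph.Walk.isPath_def, walkMono_support]; exact hq.2
  · intro x hx hx'
    rw [walkMono_support] at hx hx'
    exact hpq x hx hx'

lemma support_not_mem_of_eraseVerts {G : SimpleGraph V} {S : Set V} :
    ∀ {u z : V} (w : (G.eraseVerts S).Walk u z), u ∉ S → ∀ x ∈ w.support, x ∉ S := by
  intro u z w
  induction w with
  | nil => intro hu x hx; rw [SimpleGraph.Walk.support_nil, List.mem_singleton] at hx; rwa [hx]
  | cons h w ih =>
    intro hu x hx
    rw [SimpleGraph.Walk.support_cons, List.mem_cons] at hx
    rcases hx with rfl | hx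
    · exact hu
    · exact ih h.2.2 x hx

lemma not_reachable_eraseVerts_self {H : SimpleGraph V} {x y : V} (hxy : x ≠ y) :
    ¬ (H.eraseVerts {y}).Reachable x y := by
  intro hr
  obtain ⟨w⟩ := hr
  exact support_not_mem_of_eraseVerts w (by simpa using hxy) y w.end_mem_support rfl

lemma hits_of_not_reachable {H : SimpleGraph V} {c u z : V}
    (hnr : ¬ (H.eraseVerts {c}).Reachable u z) (w : H.Walk u z) : c ∈ w.support := by
  by_contra hc
  refine hnr ⟨w.transfer _ ?_⟩
  intro e he
  induction e with
  | h x y =>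
    have hadj : H.Adj x y := w.adj_of_mem_edges he
    have hx : x ∈ w.support := w.fst_mem_support_of_mem_edges he
    have hy : y ∈ w.support := w.snd_mem_support_of_mem_edges he
    rw [SimpleGraph.mem_edgeSet]
    exact ⟨hadj, by rintro rfl; exact hc hx, by rintro rfl; exact hc hy⟩

/-- Walk-to-fence lemma. -/
lemma fence {K' H' : SimpleGraph V} {D F W : Set V}
    (hstep : ∀ u z, u ∈ D → u ∉ F → u ∈ W → z ∈ W → H'.Adj u z →
      (z ∈ F → K'.Adj u z) ∧ (z ∉ F → K'.Adj u z ∧ z ∈ D)) :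
    ∀ {u c : V} (Q : H'.Walk u c), (∀ x ∈ Q.support, x ∈ W) → u ∈ D → u ∉ F → c ∉ D →
      ∃ σ, σ ∈ F ∧ ∃ R : K'.Walk u σ, (∀ x ∈ R.support, x ∈ W) ∧
        (∀ x ∈ R.support, x ≠ σ → x ∈ D ∧ x ∉ F) := by
  intro u c Q
  induction Q with
  | nil =>
    intro _ hu _ hc
    exact absurd hu hc
  | @cons u y c h Q ih =>
    intro hW hu huf hc
    have huW : u ∈ W := hW u (by simp)
    have hyW : y ∈ W := hW y (by simp)
    by_cases hyF : y ∈ F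
    · refine ⟨y, hyF, SimpleGraph.Walk.cons ((hstep u y hu huf huW hyW h).1 hyF) SimpleGraph.Walk.nil, ?_, ?_⟩
      · intro x hx
        have hx' : x = u ∨ x = y := by simpa using hx
        rcases hx' with rfl | rfl
        · exact huW
        · exact hyW
      · intro x hx hxy
        have hx' : x = u ∨ x = y := by simpa using hx
        rcases hx' with rfl | rfl
        · exact ⟨hu, huf⟩
        · exact absurd rfl hxy
    · obtain ⟨hK, hyD⟩ := (hstep u y hu huf huW hyW h).2 hyF
      obtain ⟨σ, hσF, R, hRW, hRD⟩ := ih (fun x hx => hW x (by simp [hx])) hyD hyF hc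
      refine ⟨σ, hσF, SimpleGraph.Walk.cons hK R, ?_, ?_⟩
      · intro x hx
        rw [SimpleGraph.Walk.support_cons, List.mem_cons] at hx
        rcases hx with rfl | hx
        · exact huW
        · exact hRW x hx
      · intro x hx hxσ
        rw [SimpleGraph.Walk.support_cons, List.mem_cons] at hx
        rcases hx with rfl | hx
        · exact ⟨hu, huf⟩
        · exact hRD x hx hxσ

end Helpers

section Menger

/-- Delete the edge between `s` and `t` (if present). -/
def SimpleGraph.delEdge (H : SimpleGraph V) (s t : V) : SimpleGraph V where
  Adj u v := H.Adj u v ∧ ¬(u = s ∧ v = t) ∧ ¬(u = t ∧ v = s)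
  symm := by
    constructor
    intro u v ⟨h, h1, h2⟩
    exact ⟨h.symm, fun ⟨ha, hb⟩ => h2 ⟨hb, ha⟩, fun ⟨ha, hb⟩ => h1 ⟨hb, ha⟩⟩
  loopless := ⟨fun v h => H.loopless.irrefl v h.1⟩

/-- The graph `H` minus the edge `st` minus the vertex `m`. -/
def KG (H : SimpleGraph V) (s t m : V) : SimpleGraph V := (H.delEdge s t).eraseVerts {m}

lemma KG_adj {H : SimpleGraph V} {s t m u v : V} :
    (KG H s t m).Adj u v ↔ H.Adj u v ∧ ¬(u = s ∧ v = t) ∧ ¬(u = t ∧ v = s) ∧ u ≠ m ∧ v ≠ m := by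
  simp only [KG, delEdge, SimpleGraph.eraseVerts, Set.mem_singleton_iff]
  tauto

lemma KG_le (H : SimpleGraph V) (s t m : V) : KG H s t m ≤ H := by
  intro u v h
  exact (KG_adj.1 h).1

lemma KG_comm (H : SimpleGraph V) (s t m : V) : KG H t s m = KG H s t m := by
  ext u v
  rw [KG_adj, KG_adj]
  tauto

lemma KG_not_reach {H : SimpleGraph V} {s t m x : V} (hxm : x ≠ m) :
    ¬ (KG H s t m).Reachable x m :=
  not_reachable_eraseVerts_self (H := H.delEdge s t) hxm

lemma eraseVerts_le_KG {H : SimpleGraph V} {s t m : V} (hm : m = s ∨ m = t) :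
    H.eraseVerts {m} ≤ KG H s t m := by
  intro u v h
  obtain ⟨h1, h2, h3⟩ := h
  simp only [Set.mem_singleton_iff] at h2 h3
  rw [KG_adj]
  rcases hm with rfl | rfl
  · exact ⟨h1, fun ⟨ha, _⟩ => h2 ha, fun ⟨_, hb⟩ => h3 hb, h2, h3⟩
  · exact ⟨h1, fun ⟨_, hb⟩ => h3 hb, fun ⟨ha, _⟩ => h2 ha, h2, h3⟩

/-- Every vertex that is not an endpoint has a walk through some third vertex. -/
lemma exists_internal {H : SimpleGraph V} {a b : V} (hadj : ¬H.Adj a b)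
    (hr : H.Reachable a b) (hab : a ≠ b) : ∃ w : V, w ≠ a ∧ w ≠ b := by
  obtain ⟨p⟩ := hr
  obtain ⟨z, h, p', -⟩ := p.exists_eq_cons_of_ne hab
  exact ⟨z, fun hz => H.loopless.irrefl a (hz ▸ h), fun hz => hadj (hz ▸ h)⟩

lemma two_neighbors {H : SimpleGraph V} {a b : V} (hab : a ≠ b) (hadj : ¬H.Adj a b)
    (hr : H.Reachable a b)
    (hnc : ∀ v, v ≠ a → v ≠ b → (H.eraseVerts {v}).Reachable a b) :
    ∃ y₁ y₂, y₁ ≠ y₂ ∧ H.Adj b y₁ ∧ H.Adj b y₂ := by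
  obtain ⟨p⟩ := hr
  obtain ⟨y₁, h1, -, -⟩ := p.reverse.exists_eq_cons_of_ne hab.symm
  have hy1a : y₁ ≠ a := fun h => hadj (h ▸ h1).symm
  have hy1b : y₁ ≠ b := fun h => H.loopless.irrefl b (h ▸ h1)
  obtain ⟨q⟩ := hnc y₁ hy1a hy1b
  obtain ⟨y₂, h2, -, -⟩ := q.reverse.exists_eq_cons_of_ne hab.symm
  refine ⟨y₁, y₂, ?_, h1, h2.1⟩
  intro h
  subst h
  exact h2.2.2 rfl

lemma three_le_ncard {α : Type*} {X : Set α} {e₁ e₂ e₃ : α}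
    (h1 : e₁ ∈ X) (h2 : e₂ ∈ X) (h3 : e₃ ∈ X)
    (h12 : e₁ ≠ e₂) (h13 : e₁ ≠ e₃) (h23 : e₂ ≠ e₃) (hX : X.Finite) : 3 ≤ X.ncard := by
  have hsub : ({e₁, e₂, e₃} : Set α) ⊆ X := by
    intro x hx
    rcases hx with rfl | rfl | rfl <;> assumption
  have : ({e₁, e₂, e₃} : Set α).ncard = 3 := by
    rw [Set.ncard_insert_of_notMem (by simp [h12, h13]) (Set.toFinite _),
      Set.ncard_insert_of_notMem (by simp [h23]) (Set.toFinite _), Set.ncard_singleton]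
  calc 3 = ({e₁, e₂, e₃} : Set α).ncard := this.symm
    _ ≤ X.ncard := Set.ncard_le_ncard hsub hX

lemma card_step {α : Type*} {A B X : Set α} {e₁ e₂ : α}
    (h1 : A ⊆ insert e₁ (insert e₂ (B \ X))) (h2 : X ⊆ B) (h3 : 3 ≤ X.ncard)
    (hB : B.Finite) : A.ncard < B.ncard := by
  have hXf : X.Finite := hB.subset h2
  have hd : (B \ X).ncard = B.ncard - X.ncard := Set.ncard_diff h2 hXf
  have hXB : X.ncard ≤ B.ncard := Set.ncard_le_ncard h2 hB
  have hA : A.ncard ≤ (B \ X).ncard + 2 := by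
    calc A.ncard ≤ (insert e₁ (insert e₂ (B \ X))).ncard :=
          Set.ncard_le_ncard h1 (((hB.diff (t := X)).insert e₂).insert e₁)
      _ ≤ (insert e₂ (B \ X)).ncard + 1 := Set.ncard_insert_le _ _
      _ ≤ (B \ X).ncard + 2 := by
          have := Set.ncard_insert_le e₂ (B \ X)
          omega
  omega

end Menger

section HL

/-- Apex graph: the `a`-side of the cut `{m, s}` together with an apex vertex `b`
joined to `s` and `m`. -/
def HLgraph (H : SimpleGraph V) (a b s t m : V) : SimpleGraph V where
  Adj u z := (H.Adj u z ∧ ((KG H s t m).Reachable a u ∨ u = m ∨ u = s)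
              ∧ ((KG H s t m).Reachable a z ∨ z = m ∨ z = s))
      ∨ (u ≠ z ∧ u = b ∧ (z = s ∨ z = m)) ∨ (u ≠ z ∧ z = b ∧ (u = s ∨ u = m))
  symm := by
    constructor
    intro u z h
    rcases h with ⟨h1, h2, h3⟩ | ⟨h1, h2, h3⟩ | ⟨h1, h2, h3⟩
    · exact Or.inl ⟨h1.symm, h3, h2⟩
    · exact Or.inr (Or.inr ⟨h1.symm, h2, h3⟩)
    · exact Or.inr (Or.inl ⟨h1.symm, h2, h3⟩)
  loopless := by
    constructor
    intro u h
    rcases h with ⟨h1, -, -⟩ | ⟨h1, -, -⟩ | ⟨h1, -, -⟩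
    · exact H.loopless.irrefl u h1
    · exact h1 rfl
    · exact h1 rfl

lemma HLdecode {H : SimpleGraph V} {a b s t m : V} :
    ∀ {u z : V} (w : (HLgraph H a b s t m).Walk u z), b ∉ w.support →
      ((KG H s t m).Reachable a u ∨ u = m ∨ u = s) →
      ∃ w' : H.Walk u z, w'.support = w.support ∧
        ∀ x ∈ w.support, ((KG H s t m).Reachable a x ∨ x = m ∨ x = s) := by
  intro u z w
  induction w with
  | nil =>
    intro _ hu
    refine ⟨SimpleGraph.Walk.nil, rfl, ?_⟩
    intro x hx
    rw [SimpleGraph.Walk.support_nil, List.mem_singleton] at hx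
    rwa [hx]
  | @cons u y z h w ih =>
    intro hb hu
    rw [SimpleGraph.Walk.support_cons, List.mem_cons] at hb
    push_neg at hb
    obtain ⟨hbu, hbw⟩ := hb
    have hyb : y ≠ b := by
      intro hyb
      exact hbw (hyb ▸ w.start_mem_support)
    rcases h with ⟨h1, h2, h3⟩ | ⟨-, h2, -⟩ | ⟨-, h2, -⟩
    · obtain ⟨w', hw's, hw'p⟩ := ih hbw h3
      refine ⟨SimpleGraph.Walk.cons h1 w', by
        show u :: w'.support = u :: w.support; rw [hw's], ?_⟩
      intro x hx
      change x ∈ u :: w.support at hx; rw [List.mem_cons] at hx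
      rcases hx with rfl | hx
      · exact hu
      · exact hw'p x hx
    · exact absurd h2.symm hbu
    · exact absurd h2 hyb

end HL

section Fan

lemma fanLemma [Fintype V] {n : ℕ}
    (ih : ∀ (H' : SimpleGraph V) (a' b' : V), H'.edgeSet.ncard ≤ n → a' ≠ b' → ¬H'.Adj a' b' →
       H'.Reachable a' b' → (∀ v, v ≠ a' → v ≠ b' → (H'.eraseVerts {v}).Reachable a' b') →
       TwoIVD H' a' b')
    {H : SimpleGraph V} {a b s t m : V}
    (hcard : H.edgeSet.ncard ≤ n + 1)
    (hab : a ≠ b) (hadj : ¬H.Adj a b) (hr : H.Reachable a b)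
    (hnc : ∀ v, v ≠ a → v ≠ b → (H.eraseVerts {v}).Reachable a b)
    (hst : H.Adj s t) (hsa : s ≠ a) (hsb : s ≠ b) (hta : t ≠ a) (htb : t ≠ b)
    (hma : m ≠ a) (hmb : m ≠ b) (hms : m ≠ s) (hmt : m ≠ t)
    (hK : ¬ (KG H s t m).Reachable a b)
    (hsCa : (KG H s t m).Reachable a s) (htCb : (KG H s t m).Reachable b t) :
    ∃ (P1 : H.Walk a s) (P2 : H.Walk a m),
      (∀ x ∈ P1.support, ((KG H s t m).Reachable a x ∨ x = s)) ∧
      (∀ x ∈ P2.support, ((KG H s t m).Reachable a x ∨ x = m)) ∧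
      (∀ x ∈ P1.support, x ∈ P2.support → x = a) := by
  classical
  have hst_ne : s ≠ t := H.ne_of_adj hst
  have htCa : ¬ (KG H s t m).Reachable a t := fun h => hK (h.trans htCb.symm)
  have hmCa : ¬ (KG H s t m).Reachable a m := KG_not_reach hma.symm
  set K := KG H s t m with hKdef
  set HL := HLgraph H a b s t m with hHLdef
  have hadjL : ¬ HL.Adj a b := by
    intro h
    rcases h with ⟨h1, -, -⟩ | ⟨-, h2, -⟩ | ⟨-, -, h3⟩
    · exact hadj h1
    · exact hab h2
    · rcases h3 with h3 | h3
      · exact hsa h3.symm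
      · exact hma h3.symm
  have hncL : ∀ v, v ≠ a → v ≠ b → (HL.eraseVerts {v}).Reachable a b := by
    intro v hva hvb
    obtain ⟨Q⟩ := hnc v hva hvb
    have hQv : ∀ x ∈ Q.support, x ≠ v := by
      intro x hx
      have := support_not_mem_of_eraseVerts Q (by simpa using hva.symm) x hx
      simpa using this
    have hstep : ∀ u z, u ∈ {x | K.Reachable a x} → u ∉ ({m, s} : Set V) →
        u ∈ {x | x ∈ Q.support} → z ∈ {x | x ∈ Q.support} → (H.eraseVerts {v}).Adj u z →
        (z ∈ ({m, s} : Set V) → ((HL.eraseVerts {v}).Adj u z)) ∧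
        (z ∉ ({m, s} : Set V) → ((HL.eraseVerts {v}).Adj u z) ∧ z ∈ {x | K.Reachable a x}) := by
      intro u z hu huf huW hzW hadj'
      obtain ⟨hH, huv, hzv⟩ := hadj'
      simp only [Set.mem_insert_iff, Set.mem_singleton_iff, not_or] at huf
      obtain ⟨hum, hus⟩ := huf
      constructor
      · intro hzF
        simp only [Set.mem_insert_iff, Set.mem_singleton_iff] at hzF
        exact ⟨Or.inl ⟨hH, Or.inl hu, Or.inr hzF⟩, huv, hzv⟩
      · intro hzF
        simp only [Set.mem_insert_iff, Set.mem_singleton_iff, not_or] at hzF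
        obtain ⟨hzm, hzs⟩ := hzF
        have hKadj : K.Adj u z := by
          rw [hKdef, KG_adj]
          exact ⟨hH, fun h => hus h.1, fun h => hzs h.2, hum, hzm⟩
        have hzCa : K.Reachable a z := hu.trans hKadj.reachable
        exact ⟨⟨Or.inl ⟨hH, Or.inl hu, Or.inl hzCa⟩, huv, hzv⟩, hzCa⟩
    obtain ⟨σ, hσF, R, hRW, -⟩ := fence hstep Q (fun x hx => hx) (Reachable.refl a)
      (by
        simp only [Set.mem_insert_iff, Set.mem_singleton_iff, not_or]
        exact ⟨fun h => hma h.symm, fun h => hsa h.symm⟩) hK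
    have hσv : σ ≠ v := hQv σ (hRW σ R.end_mem_support)
    simp only [Set.mem_insert_iff, Set.mem_singleton_iff] at hσF
    have hσsm : σ = s ∨ σ = m := hσF.symm
    have hσb : σ ≠ b := by rcases hσsm with rfl | rfl; exacts [hsb, hmb]
    have hadjσb : (HL.eraseVerts {v}).Adj σ b :=
      ⟨Or.inr (Or.inr ⟨hσb, rfl, hσsm⟩), by simpa using hσv, by simpa using hvb.symm⟩
    exact ⟨R.concat hadjσb⟩
  have hrL : HL.Reachable a b := by
    obtain ⟨w, hwa, hwb⟩ := exists_internal hadj hr hab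
    exact Reachable.mono (eraseVerts_le _ _) (hncL w hwa hwb)
  -- edge cardinality
  set X : Set (Sym2 V) := {e | e ∈ H.edgeSet ∧ b ∈ e} ∪ {s(s,t)} with hXdef
  have hXsub : X ⊆ H.edgeSet := by
    intro e he
    rcases he with he | he
    · exact he.1
    · rw [Set.mem_singleton_iff] at he
      rw [he]
      exact H.mem_edgeSet.2 hst
  obtain ⟨y₁, y₂, hy12, hby1, hby2⟩ := two_neighbors hab hadj hr hnc
  have hXcard : 3 ≤ X.ncard := by
    have hne3 : ∀ y, H.Adj b y → s(b, y) ≠ s(s, t) := by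
      intro y hy h
      have : b ∈ s(s, t) := h ▸ Sym2.mem_mk_left b y
      rw [Sym2.mem_iff] at this
      rcases this with h' | h'
      · exact hsb h'.symm
      · exact htb h'.symm
    refine three_le_ncard (e₁ := s(b, y₁)) (e₂ := s(b, y₂)) (e₃ := s(s, t))
      (Or.inl ⟨H.mem_edgeSet.2 hby1, Sym2.mem_mk_left _ _⟩)
      (Or.inl ⟨H.mem_edgeSet.2 hby2, Sym2.mem_mk_left _ _⟩)
      (Or.inr rfl) ?_ (hne3 y₁ hby1) (hne3 y₂ hby2) (Set.toFinite _)
    intro h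
    rw [Sym2.eq_iff] at h
    rcases h with ⟨-, h⟩ | ⟨-, h2⟩
    · exact hy12 h
    · exact H.loopless.irrefl b (h2 ▸ hby1)
  have hsubL : HL.edgeSet ⊆ insert s(b, s) (insert s(b, m) (H.edgeSet \ X)) := by
    intro e he
    induction e with
    | h x y =>
      rw [SimpleGraph.mem_edgeSet] at he
      rcases he with ⟨h1, h2, h3⟩ | ⟨-, rfl, h3⟩ | ⟨-, rfl, h3⟩
      · refine Or.inr (Or.inr ⟨H.mem_edgeSet.2 h1, ?_⟩)
        intro hXe
        rcases hXe with ⟨-, hbe⟩ | he3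
        · rw [Sym2.mem_iff] at hbe
          rcases hbe with rfl | rfl
          · rcases h2 with h | h | h
            exacts [hK h, hmb h.symm, hsb h.symm]
          · rcases h3 with h | h | h
            exacts [hK h, hmb h.symm, hsb h.symm]
        · rw [Set.mem_singleton_iff, Sym2.eq_iff] at he3
          rcases he3 with ⟨-, rfl⟩ | ⟨rfl, -⟩
          · rcases h3 with h | h | h
            exacts [htCa h, hmt h.symm, hst_ne h.symm]
          · rcases h2 with h | h | h
            exacts [htCa h, hmt h.symm, hst_ne h.symm]
      · rcases h3 with rfl | rfl
        · exact Set.mem_insert _ _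
        · exact Or.inr (Set.mem_insert _ _)
      · rcases h3 with rfl | rfl
        · exact Set.mem_insert_iff.mpr (Or.inl Sym2.eq_swap)
        · exact Or.inr (Set.mem_insert_iff.mpr (Or.inl Sym2.eq_swap))
  have hcardL : HL.edgeSet.ncard ≤ n := by
    have := card_step hsubL hXsub hXcard (Set.toFinite _)
    omega
  obtain ⟨p, q, hp, hq, hpq⟩ := ih HL a b hcardL hab hadjL hrL hncL
  -- decode the two paths
  have decode1 : ∀ (r : HL.Walk a b), r.IsPath → ∃ (zz : V) (r₀ : H.Walk a zz),
      (zz = s ∨ zz = m) ∧ b ∉ r₀.support ∧ (∀ x ∈ r₀.support, x ∈ r.support) ∧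
      (∀ x ∈ r₀.support, (K.Reachable a x ∨ x = m ∨ x = s)) := by
    intro r hr'
    obtain ⟨z, hbz, w, hw⟩ := r.reverse.exists_eq_cons_of_ne hab.symm
    have hzsm : z = s ∨ z = m := by
      rcases hbz with ⟨-, h2, -⟩ | ⟨-, -, h3⟩ | ⟨hne, hzb, -⟩
      · exfalso
        rcases h2 with h | h | h
        exacts [hK h, hmb h.symm, hsb h.symm]
      · exact h3
      · exact absurd hzb.symm hne
    have hwpath : w.IsPath ∧ b ∉ w.support := by
      have h' := hr'.reverse
      rw [hw, SimpleGraph.Walk.cons_isPath_iff] at h'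
      exact h'
    have hbwr : b ∉ w.reverse.support := by
      rw [SimpleGraph.Walk.support_reverse, List.mem_reverse]
      exact hwpath.2
    obtain ⟨w', hw's, hw'p⟩ := HLdecode w.reverse hbwr (Or.inl (Reachable.refl a))
    refine ⟨z, w', hzsm, by rw [hw's]; exact hbwr, ?_, ?_⟩
    · intro x hx
      rw [hw's, SimpleGraph.Walk.support_reverse, List.mem_reverse] at hx
      have hx' : x ∈ r.reverse.support := by
        rw [hw, SimpleGraph.Walk.support_cons]
        exact List.mem_cons_of_mem _ hx
      rwa [SimpleGraph.Walk.support_reverse, List.mem_reverse] at hx'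
    · intro x hx
      rw [hw's] at hx
      exact hw'p x hx
  obtain ⟨z₁, p₀, hz₁, hbp₀, hp₀sub, hp₀prop⟩ := decode1 p hp
  obtain ⟨z₂, q₀, hz₂, hbq₀, hq₀sub, hq₀prop⟩ := decode1 q hq
  have hz12 : z₁ ≠ z₂ := by
    intro h
    have h1 : z₁ ∈ p.support := hp₀sub z₁ p₀.end_mem_support
    have h2 : z₁ ∈ q.support := by rw [h]; exact hq₀sub z₂ q₀.end_mem_support
    rcases hpq z₁ h1 h2 with rfl | rfl
    · rcases hz₁ with h' | h'
      exacts [hsa h'.symm, hma h'.symm]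
    · rcases hz₁ with h' | h'
      exacts [hsb h'.symm, hmb h'.symm]
  have hshare : ∀ x, x ∈ p₀.support → x ∈ q₀.support → x = a := by
    intro x hx1 hx2
    rcases hpq x (hp₀sub x hx1) (hq₀sub x hx2) with rfl | rfl
    · rfl
    · exact absurd hx1 hbp₀
  rcases hz₁ with rfl | rfl
  · -- z₁ = s
    have hz₂m : z₂ = m := by
      rcases hz₂ with h | h
      · exact absurd h.symm hz12
      · exact h
    subst hz₂m
    refine ⟨p₀, q₀, ?_, ?_, hshare⟩
    · intro x hx
      rcases hp₀prop x hx with h | h | h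
      · exact Or.inl h
      · subst h
        exact absurd (hshare x hx q₀.end_mem_support) (fun hh => hma hh)
      · exact Or.inr h
    · intro x hx
      rcases hq₀prop x hx with h | h | h
      · exact Or.inl h
      · exact Or.inr h
      · subst h
        exact absurd (hshare x p₀.end_mem_support hx) (fun hh => hsa hh)
  · -- z₁ = m
    have hz₂s : z₂ = s := by
      rcases hz₂ with h | h
      · exact h
      · exact absurd h.symm hz12
    subst hz₂s
    refine ⟨q₀, p₀, ?_, ?_, fun x hx1 hx2 => hshare x hx2 hx1⟩
    · intro x hx
      rcases hq₀prop x hx with h | h | h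
      · exact Or.inl h
      · subst h
        exact absurd (hshare x p₀.end_mem_support hx) (fun hh => hma hh)
      · exact Or.inr h
    · intro x hx
      rcases hp₀prop x hx with h | h | h
      · exact Or.inl h
      · exact Or.inr h
      · subst h
        exact absurd (hshare x hx q₀.end_mem_support) (fun hh => hsa hh)

end Fan

section Hard

lemma hardCase [Fintype V] {n : ℕ}
    (ih : ∀ (H' : SimpleGraph V) (a' b' : V), H'.edgeSet.ncard ≤ n → a' ≠ b' → ¬H'.Adj a' b' →
       H'.Reachable a' b' → (∀ v, v ≠ a' → v ≠ b' → (H'.eraseVerts {v}).Reachable a' b') →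
       TwoIVD H' a' b')
    {H : SimpleGraph V} {a b s t m : V}
    (hcard : H.edgeSet.ncard ≤ n + 1)
    (hab : a ≠ b) (hadj : ¬H.Adj a b) (hr : H.Reachable a b)
    (hnc : ∀ v, v ≠ a → v ≠ b → (H.eraseVerts {v}).Reachable a b)
    (hst : H.Adj s t) (hsa : s ≠ a) (hsb : s ≠ b) (hta : t ≠ a) (htb : t ≠ b)
    (hma : m ≠ a) (hmb : m ≠ b) (hms : m ≠ s) (hmt : m ≠ t)
    (hK : ¬ (KG H s t m).Reachable a b)
    (hsCa : (KG H s t m).Reachable a s) (htCb : (KG H s t m).Reachable b t) :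
    TwoIVD H a b := by
  classical
  have htCa : ¬ (KG H s t m).Reachable a t := fun h => hK (h.trans htCb.symm)
  have hmCa : ¬ (KG H s t m).Reachable a m := KG_not_reach hma.symm
  have hmCb : ¬ (KG H s t m).Reachable b m := KG_not_reach hmb.symm
  obtain ⟨P1, P2, hP1, hP2, hPshare⟩ := fanLemma ih hcard hab hadj hr hnc hst hsa hsb hta htb
    hma hmb hms hmt hK hsCa htCb
  have hK' : ¬ (KG H t s m).Reachable b a := by
    rw [KG_comm]
    exact fun h => hK h.symm
  obtain ⟨Q1, Q2, hQ1, hQ2, hQshare⟩ := fanLemma ih hcard hab.symm (fun h => hadj h.symm)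
    hr.symm (fun v hvb hva => (hnc v hva hvb).symm) hst.symm htb hta hsb hsa hmb hma hmt hms
    hK' (by rw [KG_comm]; exact htCb) (by rw [KG_comm]; exact hsCa)
  rw [KG_comm] at hQ1 hQ2
  set W1 : H.Walk a b := P1.append (SimpleGraph.Walk.cons hst Q1.reverse) with hW1
  set W2 : H.Walk a b := P2.append Q2.reverse with hW2
  refine ⟨W1.bypass, W2.bypass, SimpleGraph.Walk.bypass_isPath _, SimpleGraph.Walk.bypass_isPath _, ?_⟩
  intro x hx1 hx2
  have hx1' : x ∈ W1.support := SimpleGraph.Walk.support_bypass_subset _ hx1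
  have hx2' : x ∈ W2.support := SimpleGraph.Walk.support_bypass_subset _ hx2
  rw [hW1, SimpleGraph.Walk.mem_support_append_iff] at hx1'
  rw [hW2, SimpleGraph.Walk.mem_support_append_iff] at hx2'
  have hx1'' : x ∈ P1.support ∨ x ∈ Q1.support := by
    rcases hx1' with h | h
    · exact Or.inl h
    · rw [SimpleGraph.Walk.support_cons, List.mem_cons] at h
      rcases h with rfl | h
      · exact Or.inl P1.end_mem_support
      · rw [SimpleGraph.Walk.support_reverse, List.mem_reverse] at h
        exact Or.inr h
  have hx2'' : x ∈ P2.support ∨ x ∈ Q2.support := by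
    rcases hx2' with h | h
    · exact Or.inl h
    · rw [SimpleGraph.Walk.support_reverse, List.mem_reverse] at h
      exact Or.inr h
  rcases hx1'' with h1 | h1 <;> rcases hx2'' with h2 | h2
  · exact Or.inl (hPshare x h1 h2)
  · exfalso
    rcases hP1 x h1 with hc1 | rfl
    · rcases hQ2 x h2 with hc2 | rfl
      · exact hK (hc1.trans hc2.symm)
      · exact hmCa hc1
    · rcases hQ2 x h2 with hc2 | h
      · exact hK (hsCa.trans hc2.symm)
      · exact hms h.symm
  · exfalso
    rcases hQ1 x h1 with hc1 | rfl
    · rcases hP2 x h2 with hc2 | rfl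
      · exact hK (hc2.trans hc1.symm)
      · exact hmCb hc1
    · rcases hP2 x h2 with hc2 | h
      · exact htCa hc2
      · exact hmt h.symm
  · exact Or.inr (hQshare x h1 h2)

end Hard

section MengerMain

theorem menger2aux [Fintype V] : ∀ (n : ℕ) (H : SimpleGraph V) (a b : V),
    H.edgeSet.ncard ≤ n → a ≠ b → ¬H.Adj a b → H.Reachable a b →
    (∀ v, v ≠ a → v ≠ b → (H.eraseVerts {v}).Reachable a b) → TwoIVD H a b := by
  classical
  intro n
  induction n with
  | zero =>
    intro H a b hcard hab hadj hr hnc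
    exfalso
    obtain ⟨p⟩ := hr
    obtain ⟨z, h, -, -⟩ := p.exists_eq_cons_of_ne hab
    have hmem : s(a, z) ∈ H.edgeSet := H.mem_edgeSet.2 h
    have hemp : H.edgeSet = ∅ := (Set.ncard_eq_zero (Set.toFinite _)).1 (Nat.le_zero.1 hcard)
    rw [hemp] at hmem
    exact hmem
  | succ n ih =>
    intro H a b hcard hab hadj hr hnc
    by_cases hA : ∃ s' t' m', H.Adj s' t' ∧ s' ≠ a ∧ s' ≠ b ∧ t' ≠ a ∧ t' ≠ b ∧ m' ≠ a ∧
        m' ≠ b ∧ ¬ (KG H s' t' m').Reachable a b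
    · obtain ⟨s', t', m', hst, hsa, hsb, hta, htb, hma, hmb, hKne⟩ := hA
      have hms : m' ≠ s' := by
        rintro rfl
        exact hKne (Reachable.mono (eraseVerts_le_KG (Or.inl rfl)) (hnc m' hma hmb))
      have hmt : m' ≠ t' := by
        rintro rfl
        exact hKne (Reachable.mono (eraseVerts_le_KG (Or.inr rfl)) (hnc m' hma hmb))
      have orient : ∀ (x y : V), x ≠ s' → x ≠ t' →
          (H.eraseVerts {m'}).Walk x y → ¬ (KG H s' t' m').Reachable x y →
          ((KG H s' t' m').Reachable x s' ∨ (KG H s' t' m').Reachable x t') := by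
        intro x y hxs hxt Q hxy
        have hstep : ∀ u z, u ∈ {w | (KG H s' t' m').Reachable x w} → u ∉ ({s', t'} : Set V) →
            u ∈ (Set.univ : Set V) → z ∈ (Set.univ : Set V) → (H.eraseVerts {m'}).Adj u z →
            (z ∈ ({s', t'} : Set V) → (KG H s' t' m').Adj u z) ∧
            (z ∉ ({s', t'} : Set V) → (KG H s' t' m').Adj u z ∧
              z ∈ {w | (KG H s' t' m').Reachable x w}) := by
          intro u z hu huf _ _ hadj'
          obtain ⟨hH, hum, hzm⟩ := hadj'
          simp only [Set.mem_singleton_iff] at hum hzm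
          simp only [Set.mem_insert_iff, Set.mem_singleton_iff, not_or] at huf
          obtain ⟨hus, hut⟩ := huf
          have hKadj : (KG H s' t' m').Adj u z := by
            rw [KG_adj]
            exact ⟨hH, fun hh => hus hh.1, fun hh => hut hh.1, hum, hzm⟩
          exact ⟨fun _ => hKadj, fun _ => ⟨hKadj, hu.trans hKadj.reachable⟩⟩
        obtain ⟨σ, hσF, R, -, -⟩ := fence hstep Q (fun _ _ => Set.mem_univ _)
          (Reachable.refl x)
          (by
            simp only [Set.mem_insert_iff, Set.mem_singleton_iff, not_or]
            exact ⟨hxs, hxt⟩) hxy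
        simp only [Set.mem_insert_iff, Set.mem_singleton_iff] at hσF
        rcases hσF with rfl | rfl
        · exact Or.inl ⟨R⟩
        · exact Or.inr ⟨R⟩
      obtain ⟨Qm⟩ := hnc m' hma hmb
      have hAor := orient a b (Ne.symm hsa) (Ne.symm hta) Qm hKne
      have hBor := orient b a (Ne.symm hsb) (Ne.symm htb) Qm.reverse (fun h => hKne h.symm)
      have hdisj : ∀ z, (KG H s' t' m').Reachable a z → (KG H s' t' m').Reachable b z → False :=
        fun z h1 h2 => hKne (h1.trans h2.symm)
      rcases hAor with hAs | hAt
      · have hBt : (KG H s' t' m').Reachable b t' := by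
          rcases hBor with h | h
          · exact (hdisj s' hAs h).elim
          · exact h
        exact hardCase ih hcard hab hadj hr hnc hst hsa hsb hta htb hma hmb hms hmt hKne hAs hBt
      · have hBs : (KG H s' t' m').Reachable b s' := by
          rcases hBor with h | h
          · exact h
          · exact (hdisj t' hAt h).elim
        have hKne' : ¬ (KG H t' s' m').Reachable a b := by
          rw [KG_comm]
          exact hKne
        exact hardCase ih hcard hab hadj hr hnc hst.symm hta htb hsa hsb hma hmb hmt hms hKne'
          (by rw [KG_comm]; exact hAt) (by rw [KG_comm]; exact hBs)
    · push_neg at hA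
      by_cases hmid : ∃ s' t', H.Adj s' t' ∧ s' ≠ a ∧ s' ≠ b ∧ t' ≠ a ∧ t' ≠ b
      · obtain ⟨s', t', hst, hsa, hsb, hta, htb⟩ := hmid
        have hnc' : ∀ v, v ≠ a → v ≠ b → ((H.delEdge s' t').eraseVerts {v}).Reachable a b := by
          intro v hva hvb
          exact hA s' t' v hst hsa hsb hta htb hva hvb
        have hle' : H.delEdge s' t' ≤ H := by intro u v h; exact h.1
        have hadj' : ¬ (H.delEdge s' t').Adj a b := fun h => hadj h.1
        have hr' : (H.delEdge s' t').Reachable a b := by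
          obtain ⟨w, hwa, hwb⟩ := exists_internal hadj hr hab
          exact Reachable.mono (eraseVerts_le _ _) (hnc' w hwa hwb)
        have hcard' : (H.delEdge s' t').edgeSet.ncard ≤ n := by
          have hss : (H.delEdge s' t').edgeSet ⊂ H.edgeSet := by
            constructor
            · exact edgeSet_mono hle'
            · intro hcon
              have hmem : s(s', t') ∈ (H.delEdge s' t').edgeSet := hcon (H.mem_edgeSet.2 hst)
              rw [SimpleGraph.mem_edgeSet] at hmem
              exact hmem.2.1 ⟨rfl, rfl⟩
          have := Set.ncard_lt_ncard hss (Set.toFinite _)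
          omega
        exact TwoIVD_mono hle' (ih (H.delEdge s' t') a b hcard' hab hadj' hr' hnc')
      · push_neg at hmid
        have hmid' : ∀ x y, H.Adj x y → x = a ∨ x = b ∨ y = a ∨ y = b := by
          intro x y hxy
          by_cases h1 : x = a
          · exact Or.inl h1
          by_cases h2 : x = b
          · exact Or.inr (Or.inl h2)
          by_cases h3 : y = a
          · exact Or.inr (Or.inr (Or.inl h3))
          exact Or.inr (Or.inr (Or.inr (hmid x y hxy h1 h2 h3)))
        have ML : ∀ (H₂ : SimpleGraph V), (∀ x y, H₂.Adj x y → x = a ∨ x = b ∨ y = a ∨ y = b) →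
            ¬H₂.Adj a b → H₂.Reachable a b → ∃ z, z ≠ a ∧ z ≠ b ∧ H₂.Adj a z ∧ H₂.Adj z b := by
          intro H₂ hm hadj₂ hr₂
          obtain ⟨p0⟩ := hr₂
          have hppath : p0.bypass.IsPath := p0.bypass_isPath
          obtain ⟨z, h1, q, hq⟩ := p0.bypass.exists_eq_cons_of_ne hab
          have hza : z ≠ a := fun h => H₂.loopless.irrefl a (h ▸ h1)
          have hzb : z ≠ b := fun h => hadj₂ (h ▸ h1)
          obtain ⟨z₂, h2, q₂, hq₂⟩ := q.exists_eq_cons_of_ne hzb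
          have hz₂ : z₂ = a ∨ z₂ = b := by
            rcases hm z z₂ h2 with h | h | h | h
            · exact absurd h hza
            · exact absurd h hzb
            · exact Or.inl h
            · exact Or.inr h
          have hz₂b : z₂ = b := by
            rcases hz₂ with rfl | h
            · exfalso
              rw [hq, SimpleGraph.Walk.cons_isPath_iff] at hppath
              refine hppath.2 ?_
              rw [hq₂, SimpleGraph.Walk.support_cons]
              exact List.mem_cons_of_mem _ q₂.start_mem_support
            · exact h
          subst hz₂b
          exact ⟨z, hza, hzb, h1, h2⟩
        obtain ⟨z, hza, hzb, haz, hzb'⟩ := ML H hmid' hadj hr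
        obtain ⟨z', hz'a, hz'b, haz', hz'b'⟩ := ML (H.eraseVerts {z})
          (fun x y hxy => hmid' x y hxy.1) (fun h => hadj h.1) (hnc z hza hzb)
        have hzz' : z' ≠ z := by
          have h := haz'.2.2
          simpa using h
        refine ⟨SimpleGraph.Walk.cons haz (SimpleGraph.Walk.cons hzb' SimpleGraph.Walk.nil),
          SimpleGraph.Walk.cons haz'.1 (SimpleGraph.Walk.cons hz'b'.1 SimpleGraph.Walk.nil),
          ?_, ?_, ?_⟩
        · rw [SimpleGraph.Walk.isPath_def]
          simp [hab, Ne.symm hza, hzb]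
        · rw [SimpleGraph.Walk.isPath_def]
          simp [hab, Ne.symm hz'a, hz'b]
        · intro x hx1 hx2
          have hx1' : x = a ∨ x = z ∨ x = b := by simpa using hx1
          have hx2' : x = a ∨ x = z' ∨ x = b := by simpa using hx2
          rcases hx1' with rfl | rfl | rfl
          · exact Or.inl rfl
          · rcases hx2' with h | h | h
            · exact Or.inl h
            · exact (hzz' h.symm).elim
            · exact Or.inr h
          · exact Or.inr rfl

theorem menger2 [Fintype V] {H : SimpleGraph V} {a b : V} (hab : a ≠ b) (hadj : ¬H.Adj a b)
    (hr : H.Reachable a b)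
    (hnc : ∀ v, v ≠ a → v ≠ b → (H.eraseVerts {v}).Reachable a b) : TwoIVD H a b :=
  menger2aux H.edgeSet.ncard H a b le_rfl hab hadj hr hnc

end MengerMain

theorem stmt3 [Fintype V] (G : SimpleGraph V) (T S : Set V)
    (hT2 : 2 ≤ T.ncard) (hS : IsMWNS G T S)
    (hnosep : ∀ t ∈ T, ∃ t' ∈ T, t' ≠ t ∧ (G.eraseVerts S).Reachable t t') :
    ∃ t ∈ T, ∃ v ∈ Tᶜ, ∀ t' ∈ T, t' ≠ t →
      ¬ (G.eraseVerts (S ∪ {v})).Reachable t t' := by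
  classical
  set H := G.eraseVerts S with hH
  have hnadj : ∀ t₁ ∈ T, ∀ t₂ ∈ T, t₁ ≠ t₂ → ¬ H.Adj t₁ t₂ := by
    intro t₁ h₁ t₂ h₂ hne hadj
    refine hS.2 t₁ h₁ t₂ h₂ hne ⟨SimpleGraph.Walk.cons hadj SimpleGraph.Walk.nil,
      SimpleGraph.Walk.cons hadj SimpleGraph.Walk.nil, ?_, ?_, ?_⟩
    · rw [SimpleGraph.Walk.isPath_def]
      simp [hne]
    · rw [SimpleGraph.Walk.isPath_def]
      simp [hne]
    · intro x hx _
      simpa using hx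
  have getcut : ∀ t₁ ∈ T, ∀ t₂ ∈ T, t₁ ≠ t₂ → H.Reachable t₁ t₂ →
      ∃ c, c ≠ t₁ ∧ c ≠ t₂ ∧ ¬ (H.eraseVerts {c}).Reachable t₁ t₂ := by
    intro t₁ h₁ t₂ h₂ hne hrr
    by_contra hc
    push_neg at hc
    exact hS.2 t₁ h₁ t₂ h₂ hne (menger2 hne (hnadj t₁ h₁ t₂ h₂ hne) hrr hc)
  have grec : ∀ (H₀ : SimpleGraph V), H₀ ≤ H → ∀ (n : ℕ) (t τ : V), t ∈ T → τ ∈ T → τ ≠ t →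
      H₀.Reachable t τ → H.dist t τ ≤ n →
      ∃ c τ', c ∉ T ∧ τ' ∈ T ∧ τ' ≠ t ∧ H₀.Reachable t c ∧ H₀.Reachable t τ' ∧
        ¬ (H.eraseVerts {c}).Reachable t τ' := by
    intro H₀ hle n
    induction n with
    | zero =>
      intro t τ ht hτ hne hr0 hdist
      exfalso
      have hrH : H.Reachable t τ := Reachable.mono hle hr0
      have heq := (hrH.dist_eq_zero_iff).1 (Nat.le_zero.1 hdist)
      exact hne heq.symm
    | succ n ihn =>
      intro t τ ht hτ hne hr0 hdist
      have hrH : H.Reachable t τ := Reachable.mono hle hr0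
      obtain ⟨c, hct, hcτ, hcsep⟩ := getcut t ht τ hτ hne.symm hrH
      obtain ⟨w₀⟩ := hr0
      have hcw : c ∈ w₀.support := by
        have h1 : c ∈ (walkMono hle w₀).support := hits_of_not_reachable hcsep _
        rwa [walkMono_support] at h1
      have hrc : H₀.Reachable t c := ⟨w₀.takeUntil c hcw⟩
      by_cases hcT : c ∈ T
      · obtain ⟨p, hp⟩ := hrH.exists_walk_length_eq_dist
        have hcp : c ∈ p.support := hits_of_not_reachable hcsep p
        have hd1 : H.dist t c ≤ (p.takeUntil c hcp).length := SimpleGraph.dist_le _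
        have hsplit : (p.takeUntil c hcp).length + (p.dropUntil c hcp).length = p.length := by
          have h2 := congrArg SimpleGraph.Walk.length (p.take_spec hcp)
          rwa [SimpleGraph.Walk.length_append] at h2
        have hdropne : (p.dropUntil c hcp).length ≠ 0 := by
          intro h0
          exact hcτ (SimpleGraph.Walk.eq_of_length_eq_zero h0)
        exact ihn t c ht hcT hct hrc (by omega)
      · exact ⟨c, τ, hcT, hτ, hne, hrc, ⟨w₀⟩, hcsep⟩
  have hTne : T.Nonempty := Set.nonempty_of_ncard_ne_zero (by omega)
  obtain ⟨t0, ht0⟩ := hTne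
  obtain ⟨t1, ht1, hne1, hr1⟩ := hnosep t0 ht0
  obtain ⟨c0, τ0, hc0T, hτ0T, hτ0ne, -, hrτ0, hsep0⟩ :=
    grec H le_rfl (H.dist t0 t1) t0 t1 ht0 ht1 hne1 hr1 le_rfl
  set meas : V × V → ℕ := fun pr => {z | (H.eraseVerts {pr.2}).Reachable pr.1 z}.ncard with hmeas
  set P : Set (V × V) := {pr | pr.1 ∈ T ∧ pr.2 ∉ T ∧ ∃ τ, τ ∈ T ∧ τ ≠ pr.1 ∧
      H.Reachable pr.1 τ ∧ ¬(H.eraseVerts {pr.2}).Reachable pr.1 τ} with hP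
  have hPne : (meas '' P).Nonempty :=
    ⟨meas (t0, c0), ⟨(t0, c0), ⟨ht0, hc0T, τ0, hτ0T, hτ0ne, hrτ0, hsep0⟩, rfl⟩⟩
  obtain ⟨pr, hprP, hpreq⟩ := Nat.sInf_mem hPne
  obtain ⟨t, v⟩ := pr
  obtain ⟨htT, hvT, τw, hτwT, hτwne, hτwr, hτwsep⟩ := hprP
  have hmin : ∀ pr' ∈ P, meas (t, v) ≤ meas pr' := by
    intro pr' hpr'
    rw [hpreq]
    exact Nat.sInf_le ⟨pr', hpr', rfl⟩
  refine ⟨t, htT, v, hvT, ?_⟩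
  intro t' ht' hne'
  rw [← eraseVerts_eraseVerts, ← hH]
  intro hbad
  have htv : t ≠ v := fun h => hvT (h ▸ htT)
  have hvR : ¬ (H.eraseVerts {v}).Reachable t v := not_reachable_eraseVerts_self htv
  obtain ⟨c, τs, hcT, hτsT, hτsne, hrc, hrτs, hsep⟩ :=
    grec (H.eraseVerts {v}) (eraseVerts_le _ _) (H.dist t t') t t' htT ht' hne' hbad le_rfl
  have stay : ∀ (x0 : V), ¬ (H.eraseVerts {c}).Reachable x0 v →
      ∀ {x z : V} (w : (H.eraseVerts {c}).Walk x z), (H.eraseVerts {c}).Reachable x0 x →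
      (H.eraseVerts {v}).Reachable t x → (H.eraseVerts {v}).Reachable t z := by
    intro x0 hnv
    intro x z w
    induction w with
    | nil =>
      intro _ h
      exact h
    | @cons x y z hxy w ihw =>
      intro hx0 hx
      by_cases hyv : y = v
      · exact absurd (hx0.trans (SimpleGraph.Adj.reachable (hyv ▸ hxy))) hnv
      · have hxv : x ≠ v := by
          intro hxv
          exact hvR (hxv ▸ hx)
        have hadjv : (H.eraseVerts {v}).Adj x y :=
          ⟨hxy.1, by simpa using hxv, by simpa using hyv⟩
        exact ihw (hx0.trans (SimpleGraph.Adj.reachable hxy)) (hx.trans hadjv.reachable)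
  by_cases h1 : (H.eraseVerts {c}).Reachable t v
  · by_cases h2 : (H.eraseVerts {c}).Reachable τs v
    · exact hsep (h1.trans h2.symm)
    · -- the pair (τs, c) is smaller
      have hmain : {z | (H.eraseVerts {c}).Reachable τs z} ⊆
          {z | (H.eraseVerts {v}).Reachable t z} \ {c} := by
        intro z hz
        obtain ⟨w⟩ := hz
        refine ⟨stay τs h2 w (Reachable.refl τs) hrτs, ?_⟩
        simp only [Set.mem_singleton_iff]
        intro hzc
        subst hzc
        exact not_reachable_eraseVerts_self (fun h => hcT (by rw [← h]; exact hτsT)) ⟨w⟩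
      have hlt : meas (τs, c) < meas (t, v) := by
        have hcR : c ∈ {z | (H.eraseVerts {v}).Reachable t z} := hrc
        calc meas (τs, c) ≤ ({z | (H.eraseVerts {v}).Reachable t z} \ {c}).ncard :=
              Set.ncard_le_ncard hmain (Set.toFinite _)
          _ < meas (t, v) := Set.ncard_diff_singleton_lt_of_mem hcR (Set.toFinite _)
      have hPmem : (τs, c) ∈ P := ⟨hτsT, hcT, t, htT, Ne.symm hτsne,
        (Reachable.mono (eraseVerts_le _ _) hrτs).symm, fun h => hsep h.symm⟩
      exact absurd (hmin (τs, c) hPmem) (not_le.2 hlt)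
  · -- the pair (t, c) is smaller
    have hmain : {z | (H.eraseVerts {c}).Reachable t z} ⊆
        {z | (H.eraseVerts {v}).Reachable t z} \ {c} := by
      intro z hz
      obtain ⟨w⟩ := hz
      refine ⟨stay t h1 w (Reachable.refl t) (Reachable.refl t), ?_⟩
      simp only [Set.mem_singleton_iff]
      intro hzc
      subst hzc
      exact not_reachable_eraseVerts_self (fun h => hcT (by rw [← h]; exact htT)) ⟨w⟩
    have hlt : meas (t, c) < meas (t, v) := by
      have hcR : c ∈ {z | (H.eraseVerts {v}).Reachable t z} := hrc
      calc meas (t, c) ≤ ({z | (H.eraseVerts {v}).Reachable t z} \ {c}).ncard :=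
            Set.ncard_le_ncard hmain (Set.toFinite _)
        _ < meas (t, v) := Set.ncard_diff_singleton_lt_of_mem hcR (Set.toFinite _)
    have hPmem : (t, c) ∈ P := ⟨htT, hcT, τs, hτsT, hτsne,
      Reachable.mono (eraseVerts_le _ _) hrτs, hsep⟩
    exact absurd (hmin (t, c) hPmem) (not_le.2 hlt)
end

section
/- Let S' ⊆ V(G) \ (T \ {t}) be an inclusion-wise minimal multiway near-separator of (G, T \ {t}), where t ∈ T is a terminal such that for every t' ∈ T \ {t} there are no two internally vertex-disjoint t–t' paths in G. Then t ∉ S'. -/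
open SimpleGraph

variable {V : Type*}

lemma key (G : SimpleGraph V) {t₁ t₂ t : V} (h1 : t ≠ t₁) (h2 : t ≠ t₂)
    (p q : G.Walk t₁ t₂) (hp : p.IsPath) (hq : q.IsPath)
    (hd : IntDisjoint p q) (htp : t ∈ p.support) (htq : t ∉ q.support) :
    TwoIVD G t t₁ := by
  classical
  set p₁ := p.takeUntil t htp with hp₁def
  set p₂ := p.dropUntil t htp with hp₂def
  have hsect : ∀ x, x ∈ p₁.support → x ∈ p₂.support → x = t := by
    intro x hx1 hx2
    by_contra hxt
    have hspec := p.take_spec htp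
    have hnodup : p.support.Nodup := hp.support_nodup
    rw [← hspec, Walk.support_append] at hnodup
    have hx2' : x ∈ p₂.support.tail := by
      rw [p₂.support_eq_cons, List.mem_cons] at hx2
      rcases hx2 with h | h
      · exact absurd h hxt
      · exact h
    exact (List.disjoint_of_nodup_append hnodup) hx1 hx2'
  have hp1 : p₁.IsPath := hp.takeUntil htp
  have hp2 : p₂.IsPath := hp.dropUntil htp
  -- B = p₂ ++ q.reverse : Walk t t₁
  have ht2q : t₂ ∉ q.reverse.support.tail := by
    have := hq.reverse.support_nodup
    rw [q.reverse.support_eq_cons] at this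
    exact (List.nodup_cons.mp this).1
  have hB : (p₂.append q.reverse).IsPath := by
    rw [Walk.isPath_def, Walk.support_append]
    refine List.Nodup.append hp2.support_nodup (hq.reverse.support_nodup.tail) ?_
    intro x hx1 hx2
    have hxq : x ∈ q.support := by
      have : x ∈ q.reverse.support := List.mem_of_mem_tail hx2
      rwa [Walk.support_reverse, List.mem_reverse] at this
    rcases hd x (p.support_dropUntil_subset htp hx1) hxq with h | h
    · subst h
      exact h1 (hsect _ p₁.start_mem_support hx1).symm
    · subst h
      exact ht2q hx2
  refine ⟨p₁.reverse, p₂.append q.reverse, hp1.reverse, hB, ?_⟩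
  intro x hx1 hx2
  rw [Walk.support_reverse, List.mem_reverse] at hx1
  rw [Walk.mem_support_append_iff] at hx2
  rcases hx2 with h | h
  · exact Or.inl (hsect x hx1 h)
  · rw [Walk.support_reverse, List.mem_reverse] at h
    rcases hd x (p.support_takeUntil_subset htp hx1) h with h' | h'
    · exact Or.inr h'
    · subst h'
      exact Or.inl (hsect _ hx1 p₂.end_mem_support)

theorem stmt12 (G : SimpleGraph V) (T : Set V) (t : V) (ht : t ∈ T)
    (hsep : ∀ t' ∈ T \ {t}, ¬ TwoIVD G t t')
    (S' : Set V) (hS' : IsMWNS G (T \ {t}) S')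
    (hmin : ∀ S'' : Set V, S'' ⊂ S' → ¬ IsMWNS G (T \ {t}) S'') :
    t ∉ S' := by
  intro htS
  have hsub : S' \ {t} ⊂ S' :=
    ⟨Set.diff_subset, fun h => (h htS).2 rfl⟩
  refine hmin _ hsub ⟨fun x hx => hS'.1 hx.1, ?_⟩
  rintro t₁ h₁ t₂ h₂ hne ⟨p, q, hp, hq, hd⟩
  have ht₁ : t₁ ≠ t := h₁.2
  have ht₂ : t₂ ≠ t := h₂.2
  have hle : G.eraseVerts (S' \ {t}) ≤ G := fun _ _ h => h.1
  -- transfer walks to G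
  have hedges : ∀ (r : (G.eraseVerts (S' \ {t})).Walk t₁ t₂), ∀ e ∈ r.edges, e ∈ G.edgeSet :=
    fun r e he => edgeSet_mono hle (r.edges_subset_edgeSet he)
  set pG := p.transfer G (hedges p) with hpG
  set qG := q.transfer G (hedges q) with hqG
  have hsp : pG.support = p.support := Walk.support_transfer _ _
  have hsq : qG.support = q.support := Walk.support_transfer _ _
  by_cases htp : t ∈ p.support <;> by_cases htq : t ∈ q.support
  · rcases hd t htp htq with h | h
    · exact ht₁ h.symm
    · exact ht₂ h.symm
  · refine hsep t₁ h₁ (key G ht₁.symm ht₂.symm pG qG (hp.transfer _) (hq.transfer _)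
      ?_ (hsp ▸ htp) (hsq ▸ htq))
    intro x hx hy
    exact hd x (hsp ▸ hx) (hsq ▸ hy)
  · refine hsep t₁ h₁ (key G ht₁.symm ht₂.symm qG pG (hq.transfer _) (hp.transfer _)
      ?_ (hsq ▸ htq) (hsp ▸ htp))
    intro x hx hy
    exact hd x (hsp ▸ hy) (hsq ▸ hx)
  · -- both walks avoid t: transfer to eraseVerts S'
    have hedges' : ∀ (r : (G.eraseVerts (S' \ {t})).Walk t₁ t₂), t ∉ r.support →
        ∀ e ∈ r.edges, e ∈ (G.eraseVerts S').edgeSet := by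
      intro r htr e he
      induction e with
      | h u v =>
        have hadj : (G.eraseVerts (S' \ {t})).Adj u v := r.edges_subset_edgeSet he
        have hu : u ∈ r.support := r.fst_mem_support_of_mem_edges he
        have hv : v ∈ r.support := r.snd_mem_support_of_mem_edges he
        refine ⟨hadj.1, fun h => hadj.2.1 ⟨h, ?_⟩, fun h => hadj.2.2 ⟨h, ?_⟩⟩
        · intro h'; exact htr (h' ▸ hu)
        · intro h'; exact htr (h' ▸ hv)
    refine hS'.2 t₁ h₁ t₂ h₂ hne ⟨p.transfer _ (hedges' p htp), q.transfer _ (hedges' q htq),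
      hp.transfer _, hq.transfer _, ?_⟩
    intro x hx hy
    rw [Walk.support_transfer] at hx hy
    exact hd x hx hy
end
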